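/- Commute time identity: for any two vertices u, v of a finite connected graph G = (V,E), the expected commute time satisfies E_u[τ_v] + E_v[τ_u] = 2|E| · R_eff(u,v). -/

import Mathlib

open scoped Classical

noncomputable def dirichlet {V : Type*} [Fintype V] (G : SimpleGraph V) (f : V → ℝ) : ℝ :=
  (∑ x : V, ∑ y : V, if G.Adj x y then (f x - f y) ^ 2 else 0) / 2

/-- Effective resistance with unit conductances. -/
noncomputable def Reff {V : Type*} [Fintype V] (G : SimpleGraph V) (x y : V) : ℝ :=
  (sInf {E : ℝ | ∃ f : V → ℝ, f x = 1 ∧ f y = 0 ∧ dirichlet G f = E})⁻¹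

noncomputable def pathProb {V : Type*} [Fintype V] (p : V → V → ℝ) {t : ℕ}
    (w : Fin (t + 1) → V) : ℝ :=
  ∏ k : Fin t, p (w k.castSucc) (w k.succ)

noncomputable def eventProb {V : Type*} [Fintype V] (p : V → V → ℝ) (v : V) (t : ℕ)
    (P : (Fin (t + 1) → V) → Prop) : ℝ :=
  ∑ w : Fin (t + 1) → V, if w 0 = v ∧ P w then pathProb p w else 0

/-- One step of simple random walk on `G`. -/
noncomputable def stepProb {V : Type*} [Fintype V] (G : SimpleGraph V) (x y : V) : ℝ :=
  if G.Adj x y then ((Finset.univ.filter fun z => G.Adj x z).card : ℝ)⁻¹ else 0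

/-- Expected hitting time of the vertex `z` for the walk `p` started at `v`:
    E_v[τ_z] = ∑_{t ≥ 0} P_v(τ_z > t). -/
noncomputable def expHit {V : Type*} [Fintype V] (p : V → V → ℝ) (v z : V) : ℝ :=
  ∑' t : ℕ, eventProb p v t fun w => ∀ k, w k ≠ z

namespace CTI

variable {V : Type*} [Fintype V]

lemma pathProb_cons (p : V → V → ℝ) {t : ℕ} (a : V) (g : Fin (t + 1) → V) :
    pathProb p (Fin.cons a g) = p a (g 0) * pathProb p g := by
  unfold pathProb
  rw [Fin.prod_univ_succ]
  refine congrArg₂ (· * ·) ?_ (Finset.prod_congr rfl fun k _ => ?_)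
  · rw [Fin.castSucc_zero, Fin.cons_zero, Fin.cons_succ]
  · rw [← Fin.succ_castSucc, Fin.cons_succ, Fin.cons_succ]

lemma sum_fn_succ {t : ℕ} (F : (Fin (t + 2) → V) → ℝ) :
    ∑ w : Fin (t + 2) → V, F w = ∑ a : V, ∑ g : Fin (t + 1) → V, F (Fin.cons a g) := by
  rw [← (Fin.consEquiv (fun _ : Fin (t + 2) => V)).sum_comp F, Fintype.sum_prod_type]
  rfl

lemma pathProb_zero (p : V → V → ℝ) (w : Fin 1 → V) : pathProb p w = 1 := by
  simp [pathProb]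

lemma pathProb_nonneg {p : V → V → ℝ} (hp0 : ∀ x y, 0 ≤ p x y) {t : ℕ}
    (w : Fin (t + 1) → V) : 0 ≤ pathProb p w :=
  Finset.prod_nonneg fun _ _ => hp0 _ _

lemma eventProb_nonneg {p : V → V → ℝ} (hp0 : ∀ x y, 0 ≤ p x y) (x : V) (t : ℕ)
    (P : (Fin (t + 1) → V) → Prop) : 0 ≤ eventProb p x t P := by
  apply Finset.sum_nonneg
  intro w _
  split
  · exact pathProb_nonneg hp0 w
  · exact le_rfl

lemma eventProb_zero (p : V → V → ℝ) (x : V) (P : (Fin 1 → V) → Prop) :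
    eventProb p x 0 P = if P (fun _ => x) then 1 else 0 := by
  unfold eventProb
  rw [← ((Equiv.funUnique (Fin 1) V).symm.sum_comp)]
  simp only [Equiv.funUnique_symm_apply]
  rw [Finset.sum_eq_single_of_mem x (Finset.mem_univ x)]
  · have e : (uniqueElim x : Fin 1 → V) = fun _ => x := funext fun i => rfl
    simp [pathProb_zero, e]
  · intro y _ hy
    simp [hy]

lemma eventProb_succ (p : V → V → ℝ) (x : V) (t : ℕ) (P : (Fin (t + 2) → V) → Prop) :
    eventProb p x (t + 1) P
      = ∑ g : Fin (t + 1) → V, if P (Fin.cons x g) then p x (g 0) * pathProb p g else 0 := by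
  unfold eventProb
  rw [sum_fn_succ]
  rw [Finset.sum_eq_single_of_mem x (Finset.mem_univ x)]
  · apply Finset.sum_congr rfl
    intro g _
    rw [pathProb_cons]
    simp [Fin.cons_zero]
  · intro a _ ha
    apply Finset.sum_eq_zero
    intro g _
    simp [Fin.cons_zero, ha]

lemma sum_step_eventProb (p : V → V → ℝ) (x : V) (t : ℕ) (P : (Fin (t + 1) → V) → Prop) :
    ∑ y : V, p x y * eventProb p y t P
      = ∑ g : Fin (t + 1) → V, if P g then p x (g 0) * pathProb p g else 0 := by
  unfold eventProb
  simp_rw [Finset.mul_sum, mul_ite, mul_zero]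
  rw [Finset.sum_comm]
  apply Finset.sum_congr rfl
  intro g _
  rw [Finset.sum_eq_single_of_mem (g 0) (Finset.mem_univ _)]
  · simp
  · intro y _ hy
    simp [Ne.symm hy]

noncomputable def surv (p : V → V → ℝ) (z x : V) (t : ℕ) : ℝ :=
  eventProb p x t fun w => ∀ k, w k ≠ z

lemma surv_zero (p : V → V → ℝ) (z x : V) :
    surv p z x 0 = if x = z then 0 else 1 := by
  rw [surv, eventProb_zero]
  by_cases h : x = z <;> simp [h]

lemma surv_succ (p : V → V → ℝ) (z x : V) (t : ℕ) :
    surv p z x (t + 1) = if x = z then 0 else ∑ y, p x y * surv p z y t := by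
  rw [surv, eventProb_succ]
  by_cases h : x = z
  · rw [if_pos h]
    apply Finset.sum_eq_zero
    intro g _
    rw [if_neg]
    intro hP
    exact (hP 0) (by rw [Fin.cons_zero, h])
  · rw [if_neg h]
    unfold surv
    rw [sum_step_eventProb]
    apply Finset.sum_congr rfl
    intro g _
    have hiff : (∀ k : Fin (t + 2), (Fin.cons x g : Fin (t + 2) → V) k ≠ z) ↔ (∀ k : Fin (t + 1), g k ≠ z) := by
      rw [Fin.forall_fin_succ]
      simp [Fin.cons_succ, Fin.cons_zero, h]
    simp only [hiff]
    split_ifs <;> rfl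

lemma surv_nonneg {p : V → V → ℝ} (hp0 : ∀ x y, 0 ≤ p x y) (z x : V) (t : ℕ) :
    0 ≤ surv p z x t :=
  eventProb_nonneg hp0 _ _ _

lemma surv_self (p : V → V → ℝ) (z : V) (t : ℕ) : surv p z z t = 0 := by
  cases t with
  | zero => rw [surv_zero]; simp
  | succ t => rw [surv_succ]; simp

lemma surv_le_one {p : V → V → ℝ} (hp0 : ∀ x y, 0 ≤ p x y) (hp1 : ∀ x, ∑ y, p x y = 1)
    (z : V) : ∀ t x, surv p z x t ≤ 1 := by
  intro t
  induction t with
  | zero => intro x; rw [surv_zero]; split <;> norm_num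
  | succ t ih =>
    intro x
    rw [surv_succ]
    split
    · norm_num
    · calc ∑ y, p x y * surv p z y t ≤ ∑ y, p x y * 1 := by
            apply Finset.sum_le_sum
            intro y _
            exact mul_le_mul_of_nonneg_left (ih y) (hp0 x y)
        _ = 1 := by simp [hp1 x]

lemma surv_succ_le {p : V → V → ℝ} (hp0 : ∀ x y, 0 ≤ p x y) (hp1 : ∀ x, ∑ y, p x y = 1)
    (z : V) : ∀ t x, surv p z x (t + 1) ≤ surv p z x t := by
  intro t
  induction t with
  | zero =>
    intro x
    rw [surv_zero]
    split
    · next h => rw [h, surv_self]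
    · exact surv_le_one hp0 hp1 z 1 x
  | succ t ih =>
    intro x
    rw [surv_succ, surv_succ]
    split
    · exact le_rfl
    · apply Finset.sum_le_sum
      intro y _
      exact mul_le_mul_of_nonneg_left (ih y) (hp0 x y)

lemma surv_anti {p : V → V → ℝ} (hp0 : ∀ x y, 0 ≤ p x y) (hp1 : ∀ x, ∑ y, p x y = 1)
    (z x : V) : Antitone (fun t => surv p z x t) :=
  antitone_nat_of_succ_le fun t => surv_succ_le hp0 hp1 z t x

lemma total_mass {p : V → V → ℝ} (hp1 : ∀ x, ∑ y, p x y = 1) :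
    ∀ t x, eventProb p x t (fun _ => True) = 1 := by
  intro t
  induction t with
  | zero => intro x; rw [eventProb_zero]; simp
  | succ t ih =>
    intro x
    rw [eventProb_succ, ← sum_step_eventProb p x t (fun _ => True)]
    simp [ih, hp1 x]

lemma surv_add_le {p : V → V → ℝ} (hp0 : ∀ x y, 0 ≤ p x y) (z : V) {K : ℝ} (hK : 0 ≤ K)
    {t : ℕ} (hKb : ∀ y, surv p z y t ≤ K) :
    ∀ s x, surv p z x (s + t) ≤ K * surv p z x s := by
  intro s
  induction s with
  | zero =>
    intro x
    rw [Nat.zero_add, surv_zero]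
    by_cases h : x = z
    · rw [if_pos h, h, surv_self, mul_zero]
    · rw [if_neg h, mul_one]; exact hKb x
  | succ s ih =>
    intro x
    have e : s + 1 + t = (s + t) + 1 := by omega
    rw [e, surv_succ, surv_succ]
    split
    · rw [mul_zero]
    · rw [Finset.mul_sum]
      apply Finset.sum_le_sum
      intro y _
      calc p x y * surv p z y (s + t) ≤ p x y * (K * surv p z y s) :=
            mul_le_mul_of_nonneg_left (ih y) (hp0 x y)
        _ = K * (p x y * surv p z y s) := by ring

lemma surv_pow_le {p : V → V → ℝ} (hp0 : ∀ x y, 0 ≤ p x y) (z : V) {K : ℝ} (hK : 0 ≤ K)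
    {N : ℕ} (hKb : ∀ y, surv p z y N ≤ K) :
    ∀ k x, surv p z x (k * N) ≤ K ^ k := by
  intro k
  induction k with
  | zero => intro x; rw [Nat.zero_mul, surv_zero]; split <;> norm_num
  | succ k ih =>
    intro x
    have e : (k + 1) * N = k * N + N := by ring
    rw [e, pow_succ]
    calc surv p z x (k * N + N) ≤ K * surv p z x (k * N) := surv_add_le hp0 z hK hKb _ x
      _ ≤ K * K ^ k := mul_le_mul_of_nonneg_left (ih x) hK
      _ = K ^ k * K := by ring
/-! ### Graph facts -/


variable {G : SimpleGraph V}

lemma exists_adj (hconn : G.Connected) [Nontrivial V] (x : V) : ∃ y, G.Adj x y := by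
  obtain ⟨y, hy⟩ := exists_ne x
  obtain ⟨W⟩ := hconn.preconnected x y
  have hl : 0 < W.length := by
    rcases Nat.eq_zero_or_pos W.length with h | h
    · exact absurd (SimpleGraph.Walk.eq_of_length_eq_zero h).symm hy
    · exact h
  have := W.adj_getVert_succ (i := 0) hl
  rw [SimpleGraph.Walk.getVert_zero] at this
  exact ⟨W.getVert 1, this⟩

lemma single_le_eventProb {p : V → V → ℝ} (hp0 : ∀ x y, 0 ≤ p x y) (x : V) (t : ℕ)
    (P : (Fin (t + 1) → V) → Prop) (w0 : Fin (t + 1) → V) (h : w0 0 = x) (hP : P w0) :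
    pathProb p w0 ≤ eventProb p x t P := by
  unfold eventProb
  have key := Finset.single_le_sum
    (f := fun w : Fin (t + 1) → V => if w 0 = x ∧ P w then pathProb p w else 0)
    (fun w _ => by
      split
      · exact pathProb_nonneg hp0 w
      · exact le_rfl)
    (Finset.mem_univ w0)
  rwa [if_pos ⟨h, hP⟩] at key

lemma deg_pos (hconn : G.Connected) [Nontrivial V] (x : V) :
    0 < (Finset.univ.filter fun z => G.Adj x z).card := by
  obtain ⟨y, hy⟩ := exists_adj hconn x
  exact Finset.card_pos.2 ⟨y, by simp [hy]⟩

lemma stepProb_nonneg' (G : SimpleGraph V) (x y : V) : 0 ≤ stepProb G x y := by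
  unfold stepProb
  split
  · positivity
  · exact le_rfl

lemma stepProb_rowsum (hconn : G.Connected) [Nontrivial V] (x : V) :
    ∑ y, stepProb G x y = 1 := by
  unfold stepProb
  rw [Finset.sum_ite, Finset.sum_const, Finset.sum_const_zero, add_zero, nsmul_eq_mul]
  rw [mul_inv_cancel₀]
  exact_mod_cast (deg_pos hconn x).ne'

lemma stepProb_pos_of_adj {x y : V} (h : G.Adj x y) : 0 < stepProb G x y := by
  unfold stepProb
  rw [if_pos h]
  have : 0 < (Finset.univ.filter fun z => G.Adj x z).card :=
    Finset.card_pos.2 ⟨y, by simp [h]⟩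
  positivity

lemma pathProb_walk_pos {x z : V} (W : G.Walk x z) :
    0 < pathProb (stepProb G) (fun k : Fin (W.length + 1) => W.getVert k) := by
  apply Finset.prod_pos
  intro k _
  have hadj : G.Adj (W.getVert k) (W.getVert (k + 1)) := W.adj_getVert_succ k.isLt
  have h1 : ((k.castSucc : Fin (W.length + 1)) : ℕ) = (k : ℕ) := rfl
  have h2 : ((k.succ : Fin (W.length + 1)) : ℕ) = (k : ℕ) + 1 := rfl
  exact stepProb_pos_of_adj hadj

lemma eventProb_add_compl (p : V → V → ℝ) (x : V) (t : ℕ) (P : (Fin (t + 1) → V) → Prop) :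
    eventProb p x t P + eventProb p x t (fun w => ¬ P w) = eventProb p x t (fun _ => True) := by
  unfold eventProb
  rw [← Finset.sum_add_distrib]
  apply Finset.sum_congr rfl
  intro w _
  by_cases h0 : w 0 = x <;> by_cases hP : P w <;> simp [h0, hP]

lemma surv_walk_le {x z : V} (hconn : G.Connected) [Nontrivial V] (W : G.Walk x z) :
    surv (stepProb G) z x W.length
      ≤ 1 - pathProb (stepProb G) (fun k : Fin (W.length + 1) => W.getVert k) := by
  have hsplit := eventProb_add_compl (stepProb G) x W.length (fun w => ∀ k, w k ≠ z)
  rw [total_mass (stepProb_rowsum hconn)] at hsplit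
  have hge : pathProb (stepProb G) (fun k : Fin (W.length + 1) => W.getVert k)
      ≤ eventProb (stepProb G) x W.length (fun w => ¬ ∀ k, w k ≠ z) := by
    refine single_le_eventProb (stepProb_nonneg' G) x W.length _ _ (by simp) ?_
    intro hall
    exact hall (Fin.last W.length) (by simp [SimpleGraph.Walk.getVert_length])
  have : surv (stepProb G) z x W.length
      = 1 - eventProb (stepProb G) x W.length (fun w => ¬ ∀ k, w k ≠ z) := by
    rw [surv]; linarith
  rw [this]
  linarith

lemma exists_unif (hconn : G.Connected) [Nontrivial V] (z : V) :
    ∃ (N : ℕ) (K : ℝ), 1 ≤ N ∧ 0 ≤ K ∧ K < 1 ∧ ∀ x, surv (stepProb G) z x N ≤ K := by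
  classical
  set p := stepProb G
  have hp0 := stepProb_nonneg' G
  have hp1 := stepProb_rowsum hconn (G := G)
  let W : ∀ x : V, G.Walk x z := fun x => (hconn.preconnected x z).some
  set N : ℕ := (Finset.univ.sup fun x => (W x).length) + 1 with hN
  have hN1 : 1 ≤ N := Nat.le_add_left 1 _
  have hlen : ∀ x, (W x).length ≤ N := by
    intro x
    have h1 : (W x).length ≤ Finset.univ.sup fun x => (W x).length :=
      Finset.le_sup (f := fun x => (W x).length) (Finset.mem_univ x)
    omega
  have hlt : ∀ x, surv p z x N < 1 := by
    intro x
    have h1 : surv p z x N ≤ surv p z x (W x).length :=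
      surv_anti hp0 hp1 z x (hlen x)
    have h2 := surv_walk_le hconn (W x)
    have h3 := pathProb_walk_pos (W x)
    linarith
  refine ⟨N, Finset.univ.sup' Finset.univ_nonempty (fun x => surv p z x N), hN1, ?_, ?_, ?_⟩
  · obtain ⟨x⟩ := (inferInstance : Nonempty V)
    exact le_trans (surv_nonneg hp0 z x N)
      (Finset.le_sup' (f := fun x => surv p z x N) (Finset.mem_univ x))
  · rw [Finset.sup'_lt_iff]
    intro x _
    exact hlt x
  · intro x
    exact Finset.le_sup' (f := fun x => surv p z x N) (Finset.mem_univ x)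
lemma summable_surv (hconn : G.Connected) [Nontrivial V] (z x : V) :
    Summable (fun t => surv (stepProb G) z x t) := by
  obtain ⟨N, K, hN1, hK0, hK1, hKb⟩ := exists_unif hconn z
  set p := stepProb G with hp
  have hp0 := stepProb_nonneg' G
  have hp1 := stepProb_rowsum hconn (G := G)
  have hgeom : ∀ k x, surv p z x (k * N) ≤ K ^ k := surv_pow_le hp0 z hK0 hKb
  have hblock : ∀ m, ∑ t ∈ Finset.range (m * N), surv p z x t
      ≤ ∑ k ∈ Finset.range m, (N : ℝ) * K ^ k := by
    intro m
    induction m with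
    | zero => simp
    | succ m ih =>
      have e : (m + 1) * N = m * N + N := by ring
      rw [e, Finset.sum_range_add, Finset.sum_range_succ]
      have h2 : ∑ i ∈ Finset.range N, surv p z x (m * N + i) ≤ (N : ℝ) * K ^ m := by
        calc ∑ i ∈ Finset.range N, surv p z x (m * N + i)
            ≤ ∑ _i ∈ Finset.range N, K ^ m := by
              apply Finset.sum_le_sum
              intro i _
              exact le_trans (surv_anti hp0 hp1 z x (Nat.le_add_right _ _)) (hgeom m x)
          _ = (N : ℝ) * K ^ m := by rw [Finset.sum_const, nsmul_eq_mul, Finset.card_range]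
      linarith
  have hgeosum : ∀ m, ∑ k ∈ Finset.range m, (N : ℝ) * K ^ k ≤ (N : ℝ) * (1 - K)⁻¹ := by
    intro m
    rw [← Finset.mul_sum]
    have h1K : 0 < 1 - K := by linarith
    apply mul_le_mul_of_nonneg_left _ (by positivity)
    have hformula : ∑ k ∈ Finset.range m, K ^ k = (1 - K ^ m) / (1 - K) := by
      rw [geom_sum_eq hK1.ne m]
      rw [← neg_div_neg_eq]
      ring_nf
    rw [hformula, ← one_div]
    gcongr
    linarith [pow_nonneg hK0 m]
  have hbound : ∀ m, ∑ t ∈ Finset.range m, surv p z x t ≤ (N : ℝ) * (1 - K)⁻¹ := by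
    intro m
    have hsub : Finset.range m ⊆ Finset.range (m * N) :=
      Finset.range_subset_range.2 (Nat.le_mul_of_pos_right m hN1)
    calc ∑ t ∈ Finset.range m, surv p z x t
        ≤ ∑ t ∈ Finset.range (m * N), surv p z x t :=
          Finset.sum_le_sum_of_subset_of_nonneg hsub (fun t _ _ => surv_nonneg hp0 z x t)
      _ ≤ ∑ k ∈ Finset.range m, (N : ℝ) * K ^ k := hblock m
      _ ≤ (N : ℝ) * (1 - K)⁻¹ := hgeosum m
  exact summable_of_sum_range_le (fun t => surv_nonneg hp0 z x t) hbound

noncomputable def hto (G : SimpleGraph V) (z x : V) : ℝ :=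
  ∑' t : ℕ, surv (stepProb G) z x t

lemma hto_nonneg (G : SimpleGraph V) (z x : V) : 0 ≤ hto G z x :=
  tsum_nonneg fun t => surv_nonneg (stepProb_nonneg' G) z x t

lemma hto_self (G : SimpleGraph V) (z : V) : hto G z z = 0 := by
  have he : (fun t : ℕ => surv (stepProb G) z z t) = fun _ => 0 :=
    funext fun t => surv_self _ z t
  rw [hto, he, tsum_zero]

lemma one_le_hto (hconn : G.Connected) [Nontrivial V] {z x : V} (h : x ≠ z) :
    1 ≤ hto G z x := by
  have hs := summable_surv hconn z x
  have h0 : surv (stepProb G) z x 0 = 1 := by rw [surv_zero, if_neg h]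
  calc (1 : ℝ) = surv (stepProb G) z x 0 := h0.symm
    _ ≤ ∑' t, surv (stepProb G) z x t :=
        Summable.le_tsum hs 0 fun i _ => surv_nonneg (stepProb_nonneg' G) z x i
    _ = hto G z x := rfl

lemma hto_eq (hconn : G.Connected) [Nontrivial V] {z x : V} (h : x ≠ z) :
    hto G z x = 1 + ∑ y, stepProb G x y * hto G z y := by
  have hs : ∀ y, Summable (fun t => surv (stepProb G) z y t) := summable_surv hconn z
  rw [hto, Summable.tsum_eq_zero_add (hs x)]
  have h0 : surv (stepProb G) z x 0 = 1 := by rw [surv_zero, if_neg h]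
  rw [h0]
  congr 1
  calc ∑' t : ℕ, surv (stepProb G) z x (t + 1)
      = ∑' t : ℕ, ∑ y, stepProb G x y * surv (stepProb G) z y t := by
        apply tsum_congr
        intro t
        rw [surv_succ, if_neg h]
    _ = ∑ y, ∑' t : ℕ, stepProb G x y * surv (stepProb G) z y t := by
        apply Summable.tsum_finsetSum
        intro y _
        exact (hs y).mul_left _
    _ = ∑ y, stepProb G x y * hto G z y := by
        apply Finset.sum_congr rfl
        intro y _
        exact tsum_mul_left

noncomputable def dcard (G : SimpleGraph V) (x : V) : ℕ :=
  (Finset.univ.filter fun y => G.Adj x y).card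

noncomputable def Lap (G : SimpleGraph V) (f : V → ℝ) (x : V) : ℝ :=
  (dcard G x : ℝ) * f x - ∑ y, if G.Adj x y then f y else 0

lemma card_filter_adj (G : SimpleGraph V) (y : V) :
    (Finset.univ.filter fun x => G.Adj x y).card = dcard G y := by
  unfold dcard
  congr 1
  apply Finset.filter_congr
  intro x _
  exact G.adj_comm x y

lemma Lap_hto (hconn : G.Connected) [Nontrivial V] {z x : V} (h : x ≠ z) :
    Lap G (hto G z) x = (dcard G x : ℝ) := by
  have hd : (0 : ℝ) < (dcard G x : ℝ) := by
    exact_mod_cast deg_pos hconn x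
  have hsum : ∑ y, stepProb G x y * hto G z y
      = (dcard G x : ℝ)⁻¹ * ∑ y, (if G.Adj x y then hto G z y else 0) := by
    rw [Finset.mul_sum]
    apply Finset.sum_congr rfl
    intro y _
    unfold stepProb
    split_ifs
    · rfl
    · rw [zero_mul, mul_zero]
  unfold Lap
  rw [hto_eq hconn h, hsum]
  have hne : (dcard G x : ℝ) ≠ 0 := hd.ne'
  field_simp
  ring

lemma Lap_sum_zero (G : SimpleGraph V) (f : V → ℝ) : ∑ x, Lap G f x = 0 := by
  unfold Lap
  rw [Finset.sum_sub_distrib, sub_eq_zero, Finset.sum_comm]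
  apply Finset.sum_congr rfl
  intro x _
  rw [Finset.sum_ite, Finset.sum_const, Finset.sum_const_zero, add_zero, nsmul_eq_mul,
    card_filter_adj]

lemma Lap_hto_base (hconn : G.Connected) [Nontrivial V] (z : V) :
    Lap G (hto G z) z = (dcard G z : ℝ) - ∑ x, (dcard G x : ℝ) := by
  have h0 := Lap_sum_zero G (hto G z)
  rw [← Finset.sum_erase_add _ _ (Finset.mem_univ z)] at h0
  have h1 : ∑ x ∈ Finset.univ.erase z, Lap G (hto G z) x
      = ∑ x ∈ Finset.univ.erase z, (dcard G x : ℝ) :=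
    Finset.sum_congr rfl fun x hx => Lap_hto hconn (Finset.mem_erase.1 hx).1
  have h2 : ∑ x ∈ Finset.univ.erase z, (dcard G x : ℝ) + (dcard G z : ℝ)
      = ∑ x, (dcard G x : ℝ) := Finset.sum_erase_add _ _ (Finset.mem_univ z)
  linarith

noncomputable def bil (G : SimpleGraph V) (f g : V → ℝ) : ℝ :=
  ∑ x, ∑ y, if G.Adj x y then (f x - f y) * (g x - g y) else 0

lemma bil_eq (G : SimpleGraph V) (f g : V → ℝ) :
    bil G f g = 2 * ∑ x, f x * Lap G g x := by
  unfold bil Lap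
  have expand : ∀ x y : V, (if G.Adj x y then (f x - f y) * (g x - g y) else 0)
      = ((if G.Adj x y then f x * g x else 0) - (if G.Adj x y then f x * g y else 0))
        - ((if G.Adj x y then f y * g x else 0) - (if G.Adj x y then f y * g y else 0)) := by
    intro x y
    split_ifs
    · ring
    · ring
  simp_rw [expand, Finset.sum_sub_distrib]
  have hA : ∑ x, ∑ y, (if G.Adj x y then f x * g x else 0)
      = ∑ x, (dcard G x : ℝ) * (f x * g x) := by
    apply Finset.sum_congr rfl
    intro x _
    rw [Finset.sum_ite, Finset.sum_const, Finset.sum_const_zero, add_zero, nsmul_eq_mul]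
    rfl
  have hD : ∑ x, ∑ y, (if G.Adj x y then f y * g y else 0)
      = ∑ x, (dcard G x : ℝ) * (f x * g x) := by
    rw [Finset.sum_comm]
    apply Finset.sum_congr rfl
    intro y _
    rw [Finset.sum_ite, Finset.sum_const, Finset.sum_const_zero, add_zero, nsmul_eq_mul,
      card_filter_adj]
  have hC : ∑ x, ∑ y, (if G.Adj x y then f y * g x else 0)
      = ∑ x, ∑ y, (if G.Adj x y then f x * g y else 0) := by
    rw [Finset.sum_comm]
    apply Finset.sum_congr rfl
    intro a _
    apply Finset.sum_congr rfl
    intro b _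
    exact if_congr (G.adj_comm b a) rfl rfl
  have hB : ∑ x, ∑ y, (if G.Adj x y then f x * g y else 0)
      = ∑ x, f x * ∑ y, (if G.Adj x y then g y else 0) := by
    apply Finset.sum_congr rfl
    intro x _
    rw [Finset.mul_sum]
    apply Finset.sum_congr rfl
    intro y _
    rw [mul_ite, mul_zero]
  rw [hA, hD, hC, hB]
  rw [Finset.mul_sum]
  rw [← Finset.sum_sub_distrib, ← Finset.sum_sub_distrib, ← Finset.sum_sub_distrib]
  apply Finset.sum_congr rfl
  intro x _
  ring

lemma bil_sq_le (G : SimpleGraph V) (f g : V → ℝ) :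
    (bil G f g) ^ 2 ≤ bil G f f * bil G g g := by
  set F : V × V → ℝ := fun q => if G.Adj q.1 q.2 then f q.1 - f q.2 else 0 with hF
  set H : V × V → ℝ := fun q => if G.Adj q.1 q.2 then g q.1 - g q.2 else 0 with hH
  have h1 : bil G f g = ∑ q : V × V, F q * H q := by
    rw [Fintype.sum_prod_type]
    apply Finset.sum_congr rfl
    intro x _
    apply Finset.sum_congr rfl
    intro y _
    rw [hF, hH]
    dsimp only
    split_ifs
    · rfl
    · rw [mul_zero]
  have h2 : bil G f f = ∑ q : V × V, F q ^ 2 := by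
    rw [Fintype.sum_prod_type]
    apply Finset.sum_congr rfl
    intro x _
    apply Finset.sum_congr rfl
    intro y _
    rw [hF]
    dsimp only
    split_ifs
    · ring
    · ring
  have h3 : bil G g g = ∑ q : V × V, H q ^ 2 := by
    rw [Fintype.sum_prod_type]
    apply Finset.sum_congr rfl
    intro x _
    apply Finset.sum_congr rfl
    intro y _
    rw [hH]
    dsimp only
    split_ifs
    · ring
    · ring
  rw [h1, h2, h3]
  exact Finset.sum_mul_sq_le_sq_mul_sq Finset.univ F H


lemma dirichlet_eq_bil (G : SimpleGraph V) (f : V → ℝ) :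
    dirichlet G f = bil G f f / 2 := by
  unfold dirichlet bil
  congr 1
  apply Finset.sum_congr rfl
  intro x _
  apply Finset.sum_congr rfl
  intro y _
  split_ifs
  · ring
  · rfl

lemma Lap_comb (G : SimpleGraph V) (f g : V → ℝ) (c : ℝ) (x : V) :
    Lap G (fun y => (f y - g y) * c) x = (Lap G f x - Lap G g x) * c := by
  unfold Lap
  have he : ∀ y, (if G.Adj x y then (f y - g y) * c else 0)
      = (if G.Adj x y then f y else 0) * c - (if G.Adj x y then g y else 0) * c := by
    intro y
    split_ifs
    · ring
    · ring
  simp_rw [he]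
  rw [Finset.sum_sub_distrib, ← Finset.sum_mul, ← Finset.sum_mul]
  ring

lemma bil_shift_scale (G : SimpleGraph V) (φ : V → ℝ) (c s : ℝ) :
    bil G (fun x => (φ x - c) * s) (fun x => (φ x - c) * s) = bil G φ φ * s ^ 2 := by
  unfold bil
  rw [Finset.sum_mul]
  apply Finset.sum_congr rfl
  intro x _
  rw [Finset.sum_mul]
  apply Finset.sum_congr rfl
  intro y _
  split_ifs
  · ring
  · ring

lemma handshake (G : SimpleGraph V) : ∑ x, (dcard G x : ℝ) = 2 * (G.edgeFinset.card : ℝ) := by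
  classical
  letI : DecidableRel G.Adj := fun a b => Classical.propDecidable _
  have h := SimpleGraph.sum_degrees_eq_twice_card_edges G
  have hd : ∀ x, dcard G x = G.degree x := by
    intro x
    rw [SimpleGraph.degree, SimpleGraph.neighborFinset_eq_filter]
    unfold dcard
    congr 1
  have hcard : ∑ x, dcard G x = 2 * G.edgeFinset.card := by
    calc ∑ x, dcard G x = ∑ x, G.degree x := Finset.sum_congr rfl fun x _ => hd x
      _ = 2 * G.edgeFinset.card := by
          rw [← h]
  exact_mod_cast hcard



end CTI

open CTI in
/-- commute time identity:
    E_u[τ_v] + E_v[τ_u] = 2|E|·R_eff(u,v). -/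
theorem commute_time_identity {V : Type*} [Fintype V] [DecidableEq V]
    (G : SimpleGraph V) (hconn : G.Connected) (u v : V) :
    expHit (stepProb G) u v + expHit (stepProb G) v u =
      2 * (G.edgeFinset.card : ℝ) * Reff G u v := by
  by_cases huv : u = v
  · subst huv
    have h1 : expHit (stepProb G) u u = 0 := by
      unfold expHit
      have hz : ∀ t : ℕ, eventProb (stepProb G) u t (fun w => ∀ k, w k ≠ u) = 0 := by
        intro t
        apply Finset.sum_eq_zero
        intro w _
        rw [if_neg]
        rintro ⟨h0, hall⟩
        exact hall 0 h0
      simp only [hz]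
      exact tsum_zero
    have h2 : {E : ℝ | ∃ f : V → ℝ, f u = 1 ∧ f u = 0 ∧ dirichlet G f = E} = ∅ := by
      ext E
      simp only [Set.mem_setOf_eq, Set.mem_empty_iff_false, iff_false]
      rintro ⟨f, hf1, hf0, _⟩
      rw [hf1] at hf0
      norm_num at hf0
    rw [h1, Reff, h2, Real.sInf_empty, inv_zero, mul_zero, add_zero]
  · haveI : Nontrivial V := ⟨⟨u, v, huv⟩⟩
    set p := stepProb G with hp
    set m : ℝ := (G.edgeFinset.card : ℝ) with hm
    have hvu : v ≠ u := Ne.symm huv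
    have hm_pos : 0 < m := by
      have h1 : (0 : ℝ) < (dcard G u : ℝ) := by exact_mod_cast deg_pos hconn u
      have h2 : 0 ≤ ∑ x ∈ Finset.univ.erase u, (dcard G x : ℝ) :=
        Finset.sum_nonneg fun x _ => by positivity
      have h3 := Finset.sum_erase_add Finset.univ (fun x => (dcard G x : ℝ)) (Finset.mem_univ u)
      have h4 := handshake G
      rw [hm]
      rw [← hm]
      nlinarith [h4, h3, h2, h1]
    have hm_ne : (2 : ℝ) * m ≠ 0 := by positivity
    set hv : V → ℝ := hto G v with hhv
    set hu : V → ℝ := hto G u with hhu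
    set R : ℝ := (hv u + hu v) / (2 * m) with hR
    set φ : V → ℝ := fun x => (hv x - hu x) * (2 * m)⁻¹ with hφ
    have hvu1 : 1 ≤ hv u := one_le_hto hconn huv
    have huv1 : 1 ≤ hu v := one_le_hto hconn hvu
    have hR_pos : 0 < R := by
      rw [hR]
      apply div_pos
      · linarith
      · positivity
    have hLφ : ∀ x, Lap G φ x = (if x = u then 1 else 0) - (if x = v then 1 else 0) := by
      intro x
      rw [hφ, Lap_comb]
      have hhv_val : Lap G hv x = (dcard G x : ℝ) - (if x = v then 2 * m else 0) := by
        by_cases hx : x = v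
        · subst hx
          rw [if_pos rfl, hhv, Lap_hto_base hconn, handshake G, ← hm]
        · rw [if_neg hx, sub_zero, hhv]
          exact Lap_hto hconn hx
      have hhu_val : Lap G hu x = (dcard G x : ℝ) - (if x = u then 2 * m else 0) := by
        by_cases hx : x = u
        · subst hx
          rw [if_pos rfl, hhu, Lap_hto_base hconn, handshake G, ← hm]
        · rw [if_neg hx, sub_zero, hhu]
          exact Lap_hto hconn hx
      rw [hhv_val, hhu_val]
      by_cases hxu : x = u
      · subst hxu
        rw [if_pos rfl, if_neg huv, if_pos rfl, if_neg huv]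
        field_simp
        ring
      · by_cases hxv : x = v
        · subst hxv
          rw [if_neg hvu, if_pos rfl, if_neg hvu, if_pos rfl]
          field_simp
          ring
        · rw [if_neg hxu, if_neg hxv, if_neg hxu, if_neg hxv]
          ring
    have hbilφ : ∀ f : V → ℝ, bil G f φ = 2 * (f u - f v) := by
      intro f
      rw [bil_eq]
      congr 1
      calc ∑ x, f x * Lap G φ x
          = ∑ x, (f x * (if x = u then 1 else 0) - f x * (if x = v then 1 else 0)) := by
            apply Finset.sum_congr rfl
            intro x _
            rw [hLφ x]
            ring
        _ = f u - f v := by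
            rw [Finset.sum_sub_distrib]
            simp [Finset.sum_ite_eq', mul_ite, mul_one, mul_zero]
    have huu0 : hu u = 0 := hto_self G u
    have hvv0 : hv v = 0 := hto_self G v
    have hφR : φ u - φ v = R := by
      simp only [hφ, hR]
      rw [huu0, hvv0]
      field_simp
      ring
    have hEφ : bil G φ φ = 2 * R := by rw [hbilφ φ, hφR]
    have hlower : ∀ f : V → ℝ, f u = 1 → f v = 0 → 1 / R ≤ dirichlet G f := by
      intro f hf1 hf0
      have hcs := bil_sq_le G f φ
      rw [hbilφ f, hf1, hf0, hEφ] at hcs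
      have hbff : bil G f f = 2 * dirichlet G f := by
        rw [dirichlet_eq_bil]
        ring
      rw [hbff] at hcs
      rw [div_le_iff₀ hR_pos]
      nlinarith
    set fstar : V → ℝ := fun x => (φ x - φ v) * R⁻¹ with hfstar
    have hfs1 : fstar u = 1 := by
      show (φ u - φ v) * R⁻¹ = 1
      rw [hφR]
      exact mul_inv_cancel₀ hR_pos.ne'
    have hfs0 : fstar v = 0 := by
      show (φ v - φ v) * R⁻¹ = 0
      rw [sub_self, zero_mul]
    have hfsE : dirichlet G fstar = 1 / R := by
      rw [dirichlet_eq_bil, hfstar, bil_shift_scale G φ (φ v) R⁻¹, hEφ]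
      field_simp
    have hmem : (1 / R) ∈ {E : ℝ | ∃ f : V → ℝ, f u = 1 ∧ f v = 0 ∧ dirichlet G f = E} :=
      ⟨fstar, hfs1, hfs0, hfsE⟩
    have hlb : ∀ a ∈ {E : ℝ | ∃ f : V → ℝ, f u = 1 ∧ f v = 0 ∧ dirichlet G f = E}, 1 / R ≤ a := by
      rintro a ⟨f, h1, h0, hE⟩
      rw [← hE]
      exact hlower f h1 h0
    have hsInf : sInf {E : ℝ | ∃ f : V → ℝ, f u = 1 ∧ f v = 0 ∧ dirichlet G f = E} = 1 / R :=
      le_antisymm (csInf_le ⟨1 / R, hlb⟩ hmem) (le_csInf ⟨1 / R, hmem⟩ hlb)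
    have hReff : Reff G u v = R := by
      rw [Reff, hsInf, one_div, inv_inv]
    have hLHS1 : expHit p u v = hv u := rfl
    have hLHS2 : expHit p v u = hu v := rfl
    rw [hLHS1, hLHS2, hReff, hR]
    field_simp
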